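/- arXiv:1907.02707 — 4 statements merged into one kernel-verified Lean document; each statement's English description precedes it below -/
import Mathlib

section
/- (One-step mirror descent bound) Under the assumptions of Section 3, let x_{i+1} = Prox_{β_i, x_i}(y_{i+1}) with β_i ≥ 2L, and define ξ_{i+1} = y_{i+1} − ∇φ(x_i). Then for all z ∈ X: F(x_{i+1}) − F(z) ≤ β_i[V_{x_i}(z) − V_{x_{i+1}}(z)] − ⟨ξ_{i+1}, x_i − z⟩ + ‖ξ_{i+1}‖_*² / β_i. -/
open Set Filter Topology

/-- Directional derivative as a one-sided limit of difference quotients along a segment. -/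
lemma dir_deriv_tendsto {E : Type*} [NormedAddCommGroup E] [NormedSpace ℝ E]
    {X : Set E} (hX : Convex ℝ X) {f : E → ℝ} {f' : E →L[ℝ] ℝ} {x z : E}
    (hx : x ∈ X) (hz : z ∈ X) (hd : HasFDerivWithinAt f f' X x) :
    Tendsto (fun t : ℝ => (f (x + t • (z - x)) - f x) / t) (𝓝[>] (0:ℝ))
      (𝓝 (f' (z - x))) := by
  set γ : ℝ → E := fun t => x + t • (z - x) with hγ
  have hmaps : MapsTo γ (Icc (0:ℝ) 1) X := fun t ht => hX.add_smul_sub_mem hx hz ht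
  have hγd : HasDerivWithinAt γ (z - x) (Icc (0:ℝ) 1) 0 := by
    have : HasDerivAt γ ((1:ℝ) • (z - x)) 0 :=
      ((hasDerivAt_id (0:ℝ)).smul_const (z - x)).const_add x
    simpa using this.hasDerivWithinAt
  have hcomp : HasDerivWithinAt (f ∘ γ) (f' (z - x)) (Icc (0:ℝ) 1) 0 := by
    refine hd.comp_hasDerivWithinAt_of_eq 0 hγd hmaps ?_
    simp [hγ]
  rw [hasDerivWithinAt_iff_tendsto_slope] at hcomp
  have hsub : 𝓝[Ioc (0:ℝ) 1] (0:ℝ) ≤ 𝓝[Icc (0:ℝ) 1 \ {0}] 0 := by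
    apply nhdsWithin_mono
    intro t ht
    exact ⟨⟨le_of_lt ht.1, ht.2⟩, ne_of_gt ht.1⟩
  have h1 : Tendsto (slope (f ∘ γ) 0) (𝓝[>] (0:ℝ)) (𝓝 (f' (z - x))) := by
    rw [← nhdsWithin_Ioc_eq_nhdsGT (zero_lt_one (α := ℝ))]
    exact hcomp.mono_left hsub
  refine h1.congr (fun t => ?_)
  simp [slope, γ, Function.comp]; ring

/-- Gradient inequality for a convex differentiable function. -/
lemma convex_grad_ineq {E : Type*} [NormedAddCommGroup E] [NormedSpace ℝ E]
    {X : Set E} (hX : Convex ℝ X) {f : E → ℝ} {f' : E →L[ℝ] ℝ} {x z : E}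
    (hf : ConvexOn ℝ X f) (hx : x ∈ X) (hz : z ∈ X)
    (hd : HasFDerivWithinAt f f' X x) :
    f x + f' (z - x) ≤ f z := by
  have T := dir_deriv_tendsto hX hx hz hd
  have hev : ∀ᶠ t in 𝓝[>] (0:ℝ), (f (x + t • (z - x)) - f x) / t ≤ f z - f x := by
    filter_upwards [Ioc_mem_nhdsGT_of_mem (Set.mem_Ico.2 ⟨le_refl 0, zero_lt_one⟩)]
      with t ht
    have ht0 : 0 < t := ht.1
    rw [div_le_iff₀ ht0]
    have hcomb : f ((1 - t) • x + t • z) ≤ (1 - t) * f x + t * f z :=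
      hf.2 hx hz (by linarith [ht.2]) (le_of_lt ht0) (by ring)
    have : x + t • (z - x) = (1 - t) • x + t • z := by
      rw [smul_sub, sub_smul, one_smul]; abel
    rw [this]; linarith
  have := le_of_tendsto T hev
  linarith

/-- Segment lemma: bound on the Bregman remainder from a bound on derivative increments. -/
lemma segment_remainder_le {E : Type*} [NormedAddCommGroup E] [NormedSpace ℝ E]
    {X : Set E} (hX : Convex ℝ X) {f : E → ℝ} {f' : E → (E →L[ℝ] ℝ)}
    (hd : ∀ x ∈ X, HasFDerivWithinAt f (f' x) X x) {a b : E}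
    (ha : a ∈ X) (hb : b ∈ X) {C : ℝ}
    (hC : ∀ t ∈ Set.Icc (0:ℝ) 1, (f' (a + t • (b - a)) - f' a) (b - a) ≤ C * t) :
    f b - f a - f' a (b - a) ≤ C / 2 := by
  set γ : ℝ → E := fun t => a + t • (b - a) with hγ
  have hmaps : Set.MapsTo γ (Set.Icc (0:ℝ) 1) X := fun t ht => hX.add_smul_sub_mem ha hb ht
  set g : ℝ → ℝ := fun t => f (γ t) - t * f' a (b - a) - C * t ^ 2 / 2 with hg
  have hgd : ∀ t ∈ Set.Icc (0:ℝ) 1,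
      HasDerivWithinAt g (f' (γ t) (b - a) - f' a (b - a) - C * t) (Set.Icc (0:ℝ) 1) t := by
    intro t ht
    have hγd : HasDerivWithinAt γ (b - a) (Set.Icc (0:ℝ) 1) t := by
      have : HasDerivAt γ ((1:ℝ) • (b - a)) t :=
        ((hasDerivAt_id t).smul_const (b - a)).const_add a
      simpa using this.hasDerivWithinAt
    have h1 : HasDerivWithinAt (f ∘ γ) (f' (γ t) (b - a)) (Set.Icc (0:ℝ) 1) t :=
      (hd (γ t) (hmaps ht)).comp_hasDerivWithinAt t hγd hmaps
    have h2 : HasDerivAt (fun t : ℝ => t * f' a (b - a) + C * t ^ 2 / 2)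
        (f' a (b - a) + C * t) t := by
      have ha1 : HasDerivAt (fun t : ℝ => t * f' a (b - a)) (f' a (b - a)) t := by
        simpa using (hasDerivAt_id t).mul_const (f' a (b - a))
      have ha2 : HasDerivAt (fun t : ℝ => C * t ^ 2 / 2) (C * t) t := by
        have := ((hasDerivAt_pow 2 t).const_mul C).div_const 2
        simpa using this.congr_deriv (by push_cast; ring)
      exact ha1.add ha2
    have := h1.sub h2.hasDerivWithinAt
    refine this.congr (fun s _ => by simp [hg, Function.comp]; ring) (by simp [hg]; ring)
      |>.congr_deriv (by ring)
  have hanti : AntitoneOn g (Set.Icc (0:ℝ) 1) := by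
    apply antitoneOn_of_deriv_nonpos (convex_Icc 0 1)
    · exact fun t ht => (hgd t ht).continuousWithinAt
    · intro t ht
      rw [interior_Icc] at ht
      have : HasDerivAt g (f' (γ t) (b - a) - f' a (b - a) - C * t) t :=
        ((hgd t (Set.mem_Icc_of_Ioo ht)).mono Set.Ioo_subset_Icc_self).hasDerivAt
          (Ioo_mem_nhds ht.1 ht.2)
      exact this.differentiableAt.differentiableWithinAt
    · intro t ht
      rw [interior_Icc] at ht
      have hder : HasDerivAt g (f' (γ t) (b - a) - f' a (b - a) - C * t) t :=
        ((hgd t (Set.mem_Icc_of_Ioo ht)).mono Set.Ioo_subset_Icc_self).hasDerivAt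
          (Ioo_mem_nhds ht.1 ht.2)
      rw [hder.deriv]
      have := hC t (Set.mem_Icc_of_Ioo ht)
      simp only [ContinuousLinearMap.sub_apply] at this
      linarith
  have := hanti (Set.left_mem_Icc.2 zero_le_one) (Set.right_mem_Icc.2 zero_le_one) zero_le_one
  simp only [hg, hγ] at this
  simp only [zero_smul, add_zero, one_smul] at this
  have hγ1 : a + (b - a) = b := by abel
  rw [hγ1] at this
  linarith [this]

set_option maxHeartbeats 1000000 in
/-- One-step mirror descent bound: with `x₁ = Prox_{β,x₀}(y)`, `β ≥ 2L` and
`ξ = y − ∇φ(x₀)`, for all `z ∈ X`: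
`F(x₁) − F(z) ≤ β[V_{x₀}(z) − V_{x₁}(z)] − ⟨ξ, x₀ − z⟩ + ‖ξ‖_*²/β`. -/
theorem one_step_mirror_descent
    {E : Type*} [NormedAddCommGroup E] [NormedSpace ℝ E] [FiniteDimensional ℝ E]
    (X : Set E) (hXconv : Convex ℝ X) (hXcomp : IsCompact X)
    (φ ψ F : E → ℝ) (φ' : E → (E →L[ℝ] ℝ)) (ψ' : E → (E →L[ℝ] ℝ)) (L : ℝ) (hL : 0 < L)
    (hF : ∀ x ∈ X, F x = φ x + ψ x)
    (hφconv : ConvexOn ℝ X φ)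
    (hφdiff : ∀ x ∈ X, HasFDerivWithinAt φ (φ' x) X x)
    (hLip : ∀ x ∈ X, ∀ x' ∈ X, ‖φ' x' - φ' x‖ ≤ L * ‖x - x'‖)
    (hψconv : ConvexOn ℝ X ψ)
    (hψ' : ∀ x ∈ X, ∀ y ∈ X, ψ y ≥ ψ x + ψ' x (y - x))
    (ϑ : E → ℝ) (ϑ' : E → (E →L[ℝ] ℝ))
    (hϑconv : ConvexOn ℝ X ϑ)
    (hϑdiff : ∀ x ∈ X, HasFDerivWithinAt ϑ (ϑ' x) X x)
    (hstrong : ∀ x ∈ X, ∀ x' ∈ X, (ϑ' x - ϑ' x') (x - x') ≥ ‖x - x'‖ ^ 2)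
    (V : E → E → ℝ)
    (hV : ∀ x ∈ X, ∀ z ∈ X, V x z = ϑ z - ϑ x - ϑ' x (z - x))
    (β : ℝ) (hβ : β ≥ 2 * L) (y : E →L[ℝ] ℝ)
    (x₀ x₁ : E) (hx₀ : x₀ ∈ X) (hx₁ : x₁ ∈ X)
    (hmin : IsMinOn (fun z => y z + ψ z + β * V x₀ z) X x₁)
    (ξ : E →L[ℝ] ℝ) (hξ : ξ = y - φ' x₀) :
    ∀ z ∈ X, F x₁ - F z ≤
      β * (V x₀ z - V x₁ z) - ξ (x₀ - z) + ‖ξ‖ ^ 2 / β := by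
  intro z hz
  have hβpos : (0:ℝ) < β := lt_of_lt_of_le (by linarith) hβ
  set n : ℝ := ‖x₁ - x₀‖ with hn
  have hn0 : 0 ≤ n := norm_nonneg _
  -- (1) Descent lemma
  have h1 : φ x₁ - φ x₀ - φ' x₀ (x₁ - x₀) ≤ L * n ^ 2 / 2 := by
    apply segment_remainder_le hXconv hφdiff hx₀ hx₁
    intro t ht
    set γt := x₀ + t • (x₁ - x₀) with hγt
    have hγX : γt ∈ X := hXconv.add_smul_sub_mem hx₀ hx₁ ht
    have hb : (φ' γt - φ' x₀) (x₁ - x₀) ≤ ‖φ' γt - φ' x₀‖ * n :=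
      le_trans (le_abs_self _) ((φ' γt - φ' x₀).le_opNorm (x₁ - x₀))
    have hlip := hLip x₀ hx₀ γt hγX
    have hnorm : ‖x₀ - γt‖ = t * n := by
      have hx : x₀ - γt = -(t • (x₁ - x₀)) := by rw [hγt]; abel
      rw [hx, norm_neg, norm_smul, Real.norm_eq_abs, abs_of_nonneg ht.1]
    rw [hnorm] at hlip
    calc (φ' γt - φ' x₀) (x₁ - x₀) ≤ ‖φ' γt - φ' x₀‖ * n := hb
      _ ≤ (L * (t * n)) * n := mul_le_mul_of_nonneg_right hlip hn0
      _ = L * n ^ 2 * t := by ring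
  -- (2) Gradient inequality for φ
  have h2 : φ x₀ + φ' x₀ (z - x₀) ≤ φ z :=
    convex_grad_ineq hXconv hφconv hx₀ hz (hφdiff x₀ hx₀)
  -- (4) Strong convexity: V x₀ x₁ ≥ n²/2
  have h4 : n ^ 2 / 2 ≤ V x₀ x₁ := by
    have key : (fun w => -ϑ w) x₁ - (fun w => -ϑ w) x₀ - (-(ϑ' x₀)) (x₁ - x₀)
        ≤ (-(n ^ 2)) / 2 := by
      apply segment_remainder_le hXconv (fun x hx => (hϑdiff x hx).neg) hx₀ hx₁
      intro t ht
      simp only [ContinuousLinearMap.sub_apply, ContinuousLinearMap.neg_apply]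
      rcases eq_or_lt_of_le ht.1 with h0 | h0
      · rw [← h0]
        simp
      · set γt := x₀ + t • (x₁ - x₀) with hγt
        have hγX : γt ∈ X := hXconv.add_smul_sub_mem hx₀ hx₁ ht
        have hs := hstrong γt hγX x₀ hx₀
        have hdiff : γt - x₀ = t • (x₁ - x₀) := by rw [hγt]; abel
        rw [hdiff] at hs
        simp only [ContinuousLinearMap.sub_apply, map_smul, smul_eq_mul] at hs
        have hns : ‖t • (x₁ - x₀)‖ ^ 2 = t ^ 2 * n ^ 2 := by
          rw [norm_smul, Real.norm_eq_abs, mul_pow, sq_abs]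
        rw [hns] at hs
        have hD : t * (t * n ^ 2) ≤ t * ((ϑ' γt) (x₁ - x₀) - (ϑ' x₀) (x₁ - x₀)) := by
          nlinarith
        have := le_of_mul_le_mul_left hD h0
        linarith
    rw [hV x₀ hx₀ x₁ hx₁]
    simp only [ContinuousLinearMap.neg_apply] at key
    linarith
  -- (3) Optimality inequality via one-sided derivative
  have h3 : 0 ≤ y (z - x₁) + (ψ z - ψ x₁) +
      β * ((ϑ' x₁) (z - x₁) - (ϑ' x₀) (z - x₁)) := by
    have T := dir_deriv_tendsto hXconv hx₁ hz (hϑdiff x₁ hx₁)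
    have T2 : Filter.Tendsto
        (fun t : ℝ => (y (z - x₁) + (ψ z - ψ x₁) - β * (ϑ' x₀) (z - x₁)) +
          β * ((ϑ (x₁ + t • (z - x₁)) - ϑ x₁) / t)) (nhdsWithin 0 (Set.Ioi 0))
        (nhds ((y (z - x₁) + (ψ z - ψ x₁) - β * (ϑ' x₀) (z - x₁)) +
          β * (ϑ' x₁) (z - x₁))) := (T.const_mul β).const_add _
    have hge : 0 ≤ (y (z - x₁) + (ψ z - ψ x₁) - β * (ϑ' x₀) (z - x₁)) +
        β * (ϑ' x₁) (z - x₁) := by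
      apply ge_of_tendsto T2
      filter_upwards [Ioc_mem_nhdsGT_of_mem (Set.mem_Ico.2 ⟨le_refl (0:ℝ), zero_lt_one⟩)]
        with t ht
      have ht0 : (0:ℝ) < t := ht.1
      set zt := x₁ + t • (z - x₁) with hzt
      have hztX : zt ∈ X := hXconv.add_smul_sub_mem hx₁ hz ⟨le_of_lt ht0, ht.2⟩
      have hm : y x₁ + ψ x₁ + β * V x₀ x₁ ≤ y zt + ψ zt + β * V x₀ zt := hmin hztX
      rw [hV x₀ hx₀ x₁ hx₁, hV x₀ hx₀ zt hztX] at hm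
      have hy : y zt = y x₁ + t * y (z - x₁) := by
        rw [hzt, map_add, map_smul, smul_eq_mul]
      have hψt : ψ zt ≤ (1 - t) * ψ x₁ + t * ψ z := by
        have hco : zt = (1 - t) • x₁ + t • z := by
          rw [hzt, smul_sub, sub_smul, one_smul]; abel
        rw [hco]
        exact hψconv.2 hx₁ hz (by linarith [ht.2]) (le_of_lt ht0) (by ring)
      have hϑ0 : (ϑ' x₀) (zt - x₀) = (ϑ' x₀) (x₁ - x₀) + t * (ϑ' x₀) (z - x₁) := by
        have hzx : zt - x₀ = (x₁ - x₀) + t • (z - x₁) := by rw [hzt]; abel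
        rw [hzx, map_add, map_smul, smul_eq_mul]
      have hA : 0 ≤ t * y (z - x₁) + t * (ψ z - ψ x₁) + β * (ϑ zt - ϑ x₁)
          - β * (t * (ϑ' x₀) (z - x₁)) := by
        rw [hy, hϑ0] at hm
        nlinarith [hψt]
      have heq : (y (z - x₁) + (ψ z - ψ x₁) - β * (ϑ' x₀) (z - x₁)) +
          β * ((ϑ zt - ϑ x₁) / t) =
          (t * y (z - x₁) + t * (ψ z - ψ x₁) + β * (ϑ zt - ϑ x₁)
            - β * (t * (ϑ' x₀) (z - x₁))) / t := by
        field_simp; ring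
      rw [heq]
      exact div_nonneg hA (le_of_lt ht0)
    linarith
  -- Bregman three-point identity
  have hVid : β * ((ϑ' x₁) (z - x₁) - (ϑ' x₀) (z - x₁)) =
      β * V x₀ z - β * V x₀ x₁ - β * V x₁ z := by
    rw [hV x₀ hx₀ z hz, hV x₀ hx₀ x₁ hx₁, hV x₁ hx₁ z hz]
    have hsp : (ϑ' x₀) (z - x₀) = (ϑ' x₀) (z - x₁) + (ϑ' x₀) (x₁ - x₀) := by
      rw [← map_add]; congr 1; abel
    rw [hsp]; ring
  rw [hVid] at h3
  -- (5) Young's inequality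
  have h5 : ξ (x₀ - x₁) ≤ ‖ξ‖ ^ 2 / β + β * n ^ 2 / 4 := by
    have hop : ξ (x₀ - x₁) ≤ ‖ξ‖ * n := by
      have hb := le_trans (le_abs_self _) (ξ.le_opNorm (x₀ - x₁))
      rwa [norm_sub_rev] at hb
    have H : ‖ξ‖ * n * β ≤ ‖ξ‖ ^ 2 + β ^ 2 * n ^ 2 / 4 := by
      nlinarith [sq_nonneg (‖ξ‖ - β * n / 2)]
    have hd : ‖ξ‖ * n ≤ (‖ξ‖ ^ 2 + β ^ 2 * n ^ 2 / 4) / β := by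
      rw [le_div_iff₀ hβpos]; linarith
    have heq : (‖ξ‖ ^ 2 + β ^ 2 * n ^ 2 / 4) / β = ‖ξ‖ ^ 2 / β + β * n ^ 2 / 4 := by
      field_simp
    rw [heq] at hd
    linarith
  have h6 : L * n ^ 2 / 2 ≤ β * n ^ 2 / 4 := by nlinarith [sq_nonneg n]
  -- linear bookkeeping
  have hy2 : y (z - x₁) = ξ (x₀ - x₁) - ξ (x₀ - z) + φ' x₀ (z - x₀) - φ' x₀ (x₁ - x₀) := by
    have hyx : y (z - x₁) = ξ (z - x₁) + φ' x₀ (z - x₁) := by rw [hξ]; simp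
    have e1 : ξ (z - x₁) = ξ (x₀ - x₁) - ξ (x₀ - z) := by
      rw [← map_sub]; congr 1; abel
    have e2 : (φ' x₀) (z - x₁) = φ' x₀ (z - x₀) - φ' x₀ (x₁ - x₀) := by
      rw [← map_sub]; congr 1; abel
    rw [hyx, e1, e2]; ring
  have hβh4 : β * (n ^ 2 / 2) ≤ β * V x₀ x₁ :=
    mul_le_mul_of_nonneg_left h4 (le_of_lt hβpos)
  rw [hF x₁ hx₁, hF z hz]
  rw [hy2] at h3
  linarith
end

section
/- (Proposition 1, first chain) Let β_{i−1} ≥ 2L for all i, x_i = Prox_{β_{i−1}, x_{i−1}}(y_i), ξ_i = y_i − ∇φ(x_{i−1}), and x̂_N = [∑_{i=1}^N β_{i−1}^{-1}]^{-1} ∑_{i=1}^N β_{i−1}^{-1} x_i. Then for any z ∈ X: [∑_{i=1}^N β_{i−1}^{-1}] (F(x̂_N) − F(z)) ≤ V_{x_0}(z) + ∑_{i=1}^N [ ⟨ξ_i, z − x_{i−1}⟩/β_{i−1} + ‖ξ_i‖_*²/β_{i−1}² ]. -/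
open Finset


open Finset Set

/-- If `g` has nonnegative derivative on `[0,1]`, then `g 0 ≤ g 1`. -/
lemma md_aux_mono (g g' : ℝ → ℝ)
    (hg : ∀ t ∈ Set.Icc (0:ℝ) 1, HasDerivWithinAt g (g' t) (Set.Icc 0 1) t)
    (hg' : ∀ t ∈ Set.Ioo (0:ℝ) 1, 0 ≤ g' t) : g 0 ≤ g 1 := by
  have hmono : MonotoneOn g (Set.Icc 0 1) := by
    apply monotoneOn_of_hasDerivWithinAt_nonneg (f' := g') (convex_Icc 0 1)
      (fun t ht => (hg t ht).continuousWithinAt)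
    · intro t ht
      rw [interior_Icc] at ht ⊢
      exact (hg t (Set.Ioo_subset_Icc_self ht)).mono Set.Ioo_subset_Icc_self
    · intro t ht
      rw [interior_Icc] at ht
      exact hg' t ht
  exact hmono (by norm_num) (by norm_num) zero_le_one

lemma md_aux_quad_le (g g' : ℝ → ℝ) (c : ℝ)
    (hg : ∀ t ∈ Set.Icc (0:ℝ) 1, HasDerivWithinAt g (g' t) (Set.Icc 0 1) t)
    (hc : ∀ t ∈ Set.Ioo (0:ℝ) 1, g' t ≤ c * t) : g 1 - g 0 ≤ c / 2 := by
  have key := md_aux_mono (fun t => c / 2 * (t * t) - g t)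
    (fun t => c / 2 * (t + t) - g' t)
    (fun t ht => by
      have hsq : HasDerivAt (fun s : ℝ => s * s) (t + t) t := by
        simpa using (hasDerivAt_id' t).fun_mul (hasDerivAt_id' t)
      exact ((hsq.const_mul (c / 2)).hasDerivWithinAt).sub (hg t ht))
    (fun t ht => by
      show 0 ≤ c / 2 * (t + t) - g' t
      have := hc t ht; linarith)
  nlinarith [key]

lemma md_aux_quad_ge (g g' : ℝ → ℝ) (c : ℝ)
    (hg : ∀ t ∈ Set.Icc (0:ℝ) 1, HasDerivWithinAt g (g' t) (Set.Icc 0 1) t)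
    (hc : ∀ t ∈ Set.Ioo (0:ℝ) 1, c * t ≤ g' t) : c / 2 ≤ g 1 - g 0 := by
  have := md_aux_quad_le (fun t => -g t) (fun t => -g' t) (-c)
    (fun t ht => (hg t ht).neg)
    (fun t ht => by
      show -g' t ≤ -c * t
      have := hc t ht; linarith)
  linarith

/-- Derivative of `f` along the segment from `a` to `b`. -/
lemma md_aux_comp {E : Type*} [NormedAddCommGroup E] [NormedSpace ℝ E]
    (X : Set E) (hX : Convex ℝ X)
    (f : E → ℝ) (f' : E → E →L[ℝ] ℝ) (hf : ∀ u ∈ X, HasFDerivWithinAt f (f' u) X u)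
    (a b : E) (ha : a ∈ X) (hb : b ∈ X) (t : ℝ) (ht : t ∈ Set.Icc (0:ℝ) 1) :
    HasDerivWithinAt (fun s : ℝ => f (a + s • (b - a)))
      (f' (a + t • (b - a)) (b - a)) (Set.Icc 0 1) t := by
  have hmaps : Set.MapsTo (fun s : ℝ => a + s • (b - a)) (Set.Icc 0 1) X :=
    fun s hs => hX.add_smul_sub_mem ha hb hs
  have hγ : HasDerivWithinAt (fun s : ℝ => a + s • (b - a)) (b - a) (Set.Icc 0 1) t := by
    simpa using (((hasDerivAt_id t).smul_const (b - a)).const_add a).hasDerivWithinAt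
      (s := Set.Icc (0:ℝ) 1)
  exact (hf _ (hmaps ht)).comp_hasDerivWithinAt t hγ hmaps

/-- Descent lemma for a function with Lipschitz gradient on a convex set. -/
lemma md_aux_descent {E : Type*} [NormedAddCommGroup E] [NormedSpace ℝ E]
    (X : Set E) (hX : Convex ℝ X)
    (f : E → ℝ) (f' : E → E →L[ℝ] ℝ) (hf : ∀ u ∈ X, HasFDerivWithinAt f (f' u) X u)
    (C : ℝ) (hC : 0 ≤ C)
    (hlip : ∀ u ∈ X, ∀ v ∈ X, ‖f' v - f' u‖ ≤ C * ‖u - v‖)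
    (a b : E) (ha : a ∈ X) (hb : b ∈ X) :
    f b - f a - f' a (b - a) ≤ C / 2 * ‖b - a‖ ^ 2 := by
  have key := md_aux_quad_le (fun s : ℝ => f (a + s • (b - a)) - s * f' a (b - a))
    (fun s => f' (a + s • (b - a)) (b - a) - f' a (b - a)) (C * ‖b - a‖ ^ 2)
    (fun t ht => ((md_aux_comp X hX f f' hf a b ha hb t ht).sub
      ((hasDerivAt_mul_const (f' a (b - a))).hasDerivWithinAt)))
    (fun t ht => by
      show f' (a + t • (b - a)) (b - a) - f' a (b - a) ≤ C * ‖b - a‖ ^ 2 * t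
      have hmem : a + t • (b - a) ∈ X :=
        hX.add_smul_sub_mem ha hb (Set.Ioo_subset_Icc_self ht)
      have h1 : f' (a + t • (b - a)) (b - a) - f' a (b - a)
          = (f' (a + t • (b - a)) - f' a) (b - a) := by
        simp [ContinuousLinearMap.sub_apply]
      have h2 : (f' (a + t • (b - a)) - f' a) (b - a)
          ≤ ‖f' (a + t • (b - a)) - f' a‖ * ‖b - a‖ :=
        le_trans (le_abs_self _) ((f' (a + t • (b - a)) - f' a).le_opNorm (b - a))
      have h3 : ‖f' (a + t • (b - a)) - f' a‖ ≤ C * ‖a - (a + t • (b - a))‖ :=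
        hlip a ha _ hmem
      have h4 : ‖a - (a + t • (b - a))‖ = t * ‖b - a‖ := by
        have he : a - (a + t • (b - a)) = -(t • (b - a)) := by abel
        rw [he, norm_neg, norm_smul, Real.norm_eq_abs, abs_of_pos ht.1]
      rw [h4] at h3
      have h5 : ‖f' (a + t • (b - a)) - f' a‖ * ‖b - a‖ ≤ C * t * ‖b - a‖ * ‖b - a‖ :=
        by nlinarith [norm_nonneg (b - a), norm_nonneg (f' (a + t • (b - a)) - f' a)]
      rw [h1]
      nlinarith [h2, h5])
  simp only [zero_smul, add_zero, one_smul, zero_mul, one_mul, add_sub_cancel] at key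
  nlinarith [key]

/-- Strong convexity: the Bregman divergence dominates half the squared norm. -/
lemma md_aux_strongdiv {E : Type*} [NormedAddCommGroup E] [NormedSpace ℝ E]
    (X : Set E) (hX : Convex ℝ X)
    (f : E → ℝ) (f' : E → E →L[ℝ] ℝ) (hf : ∀ u ∈ X, HasFDerivWithinAt f (f' u) X u)
    (hmono : ∀ u ∈ X, ∀ v ∈ X, (f' u - f' v) (u - v) ≥ ‖u - v‖ ^ 2)
    (a b : E) (ha : a ∈ X) (hb : b ∈ X) :
    1 / 2 * ‖b - a‖ ^ 2 ≤ f b - f a - f' a (b - a) := by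
  have key := md_aux_quad_ge (fun s : ℝ => f (a + s • (b - a)) - s * f' a (b - a))
    (fun s => f' (a + s • (b - a)) (b - a) - f' a (b - a)) (‖b - a‖ ^ 2)
    (fun t ht => ((md_aux_comp X hX f f' hf a b ha hb t ht).sub
      ((hasDerivAt_mul_const (f' a (b - a))).hasDerivWithinAt)))
    (fun t ht => by
      show ‖b - a‖ ^ 2 * t ≤ f' (a + t • (b - a)) (b - a) - f' a (b - a)
      have hmem : a + t • (b - a) ∈ X :=
        hX.add_smul_sub_mem ha hb (Set.Ioo_subset_Icc_self ht)
      have h0 := hmono _ hmem a ha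
      have h1 : a + t • (b - a) - a = t • (b - a) := by abel
      rw [h1] at h0
      have h2 : (f' (a + t • (b - a)) - f' a) (t • (b - a))
          = t * ((f' (a + t • (b - a)) - f' a) (b - a)) := by
        rw [map_smul]; simp
      have h3 : ‖t • (b - a)‖ ^ 2 = t ^ 2 * ‖b - a‖ ^ 2 := by
        rw [norm_smul, Real.norm_eq_abs, mul_pow, sq_abs]
      rw [h2, h3] at h0
      have ht0 : 0 < t := ht.1
      have h5 : (f' (a + t • (b - a)) - f' a) (b - a)
          = f' (a + t • (b - a)) (b - a) - f' a (b - a) := by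
        simp [ContinuousLinearMap.sub_apply]
      rw [h5] at h0
      nlinarith [h0, ht0])
  simp only [zero_smul, add_zero, one_smul, zero_mul, one_mul, add_sub_cancel] at key
  nlinarith [key]

/-- Gradient inequality for a convex differentiable function on a convex set. -/
lemma md_aux_gradineq {E : Type*} [NormedAddCommGroup E] [NormedSpace ℝ E]
    (X : Set E) (hX : Convex ℝ X)
    (f : E → ℝ) (f' : E → E →L[ℝ] ℝ) (hconv : ConvexOn ℝ X f)
    (hf : ∀ u ∈ X, HasFDerivWithinAt f (f' u) X u)
    (a b : E) (ha : a ∈ X) (hb : b ∈ X) :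
    f a + f' a (b - a) ≤ f b := by
  have hslope : Filter.Tendsto (slope (fun s : ℝ => f (a + s • (b - a))) 0)
      (nhdsWithin 0 ((Set.Icc (0:ℝ) 1) \ {0})) (nhds (f' a (b - a))) := by
    have h := md_aux_comp X hX f f' hf a b ha hb 0 (by norm_num)
    simp only [zero_smul, add_zero] at h
    exact hasDerivWithinAt_iff_tendsto_slope.mp h
  have hne : (nhdsWithin (0:ℝ) (Set.Ioc 0 1)).NeBot := left_nhdsWithin_Ioc_neBot one_pos
  have hsub : Set.Ioc (0:ℝ) 1 ⊆ (Set.Icc (0:ℝ) 1) \ {0} := fun t ht =>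
    ⟨⟨ht.1.le, ht.2⟩, ne_of_gt ht.1⟩
  have hslope' := hslope.mono_left (nhdsWithin_mono 0 hsub)
  have hlim : f' a (b - a) ≤ f b - f a := by
    refine le_of_tendsto hslope' ?_
    filter_upwards [self_mem_nhdsWithin] with t ht
    have ht0 : 0 < t := ht.1
    have hconvpt : f (a + t • (b - a)) ≤ (1 - t) * f a + t * f b := by
      have h := hconv.2 ha hb (by linarith [ht.2] : (0:ℝ) ≤ 1 - t) ht0.le (by ring)
      have heq : (1 - t) • a + t • b = a + t • (b - a) := by
        rw [smul_sub]; module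
      rw [heq] at h
      simpa using h
    have hs : slope (fun s : ℝ => f (a + s • (b - a))) 0 t
        = (f (a + t • (b - a)) - f a) / t := by
      simp [slope_def_field]
    rw [hs, div_le_iff₀ ht0]
    nlinarith [hconvpt]
  linarith

/-- First-order optimality at the prox point. -/
lemma md_aux_prox {E : Type*} [NormedAddCommGroup E] [NormedSpace ℝ E]
    (X : Set E) (hX : Convex ℝ X)
    (s ϑ : E → ℝ) (ϑ' : E → E →L[ℝ] ℝ) (β : ℝ) (hβ : 0 < β)
    (hs : ConvexOn ℝ X s)
    (hϑdiff : ∀ u ∈ X, HasFDerivWithinAt ϑ (ϑ' u) X u)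
    (p : E) (hp : p ∈ X) (hmin : ∀ u ∈ X, s p + β * ϑ p ≤ s u + β * ϑ u)
    (w : E) (hw : w ∈ X) :
    s p ≤ s w + β * ϑ' p (w - p) := by
  have hslope : Filter.Tendsto (slope (fun t : ℝ => ϑ (p + t • (w - p))) 0)
      (nhdsWithin 0 ((Set.Icc (0:ℝ) 1) \ {0})) (nhds (ϑ' p (w - p))) := by
    have h := md_aux_comp X hX ϑ ϑ' hϑdiff p w hp hw 0 (by norm_num)
    simp only [zero_smul, add_zero] at h
    exact hasDerivWithinAt_iff_tendsto_slope.mp h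
  have hne : (nhdsWithin (0:ℝ) (Set.Ioc 0 1)).NeBot := left_nhdsWithin_Ioc_neBot one_pos
  have hsub : Set.Ioc (0:ℝ) 1 ⊆ (Set.Icc (0:ℝ) 1) \ {0} := fun t ht =>
    ⟨⟨ht.1.le, ht.2⟩, ne_of_gt ht.1⟩
  have hslope' := (hslope.mono_left (nhdsWithin_mono 0 hsub)).const_mul β
  have hfin : s p - s w ≤ β * ϑ' p (w - p) := by
    refine ge_of_tendsto hslope' ?_
    filter_upwards [self_mem_nhdsWithin] with t ht
    have ht0 : 0 < t := ht.1
    have hmem : p + t • (w - p) ∈ X := hX.add_smul_sub_mem hp hw ⟨ht0.le, ht.2⟩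
    have h1 := hmin _ hmem
    have hsconv : s (p + t • (w - p)) ≤ (1 - t) * s p + t * s w := by
      have h := hs.2 hp hw (by linarith [ht.2] : (0:ℝ) ≤ 1 - t) ht0.le (by ring)
      have heq : (1 - t) • p + t • w = p + t • (w - p) := by
        rw [smul_sub]; module
      rw [heq] at h
      simpa using h
    have hslopeval : slope (fun t : ℝ => ϑ (p + t • (w - p))) 0 t
        = (ϑ (p + t • (w - p)) - ϑ p) / t := by
      simp [slope_def_field]
    show s p - s w ≤ β * slope (fun t : ℝ => ϑ (p + t • (w - p))) 0 t
    rw [hslopeval, ← mul_div_assoc, le_div_iff₀ ht0]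
    nlinarith [h1, hsconv]
  linarith

set_option maxHeartbeats 1000000 in
/-- Proposition 1, first chain: for the mirror descent iterates
`x_i = Prox_{β_{i−1},x_{i−1}}(y_i)` with `β_{i−1} ≥ 2L`, `ξ_i = y_i − ∇φ(x_{i−1})`, and
`x̂_N = [∑ β_{i−1}⁻¹]⁻¹ ∑ β_{i−1}⁻¹ x_i`, for any `z ∈ X`:
`[∑ β_{i−1}⁻¹](F(x̂_N) − F(z)) ≤ V_{x_0}(z) + ∑ [⟨ξ_i, z − x_{i−1}⟩/β_{i−1} + ‖ξ_i‖²/β_{i−1}²]`. -/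
theorem mirror_descent_chain
    {E : Type*} [NormedAddCommGroup E] [NormedSpace ℝ E] [FiniteDimensional ℝ E]
    (X : Set E) (hXconv : Convex ℝ X) (hXcomp : IsCompact X)
    (φ ψ F : E → ℝ) (φ' : E → (E →L[ℝ] ℝ)) (ψ' : E → (E →L[ℝ] ℝ)) (L : ℝ) (hL : 0 < L)
    (hF : ∀ x ∈ X, F x = φ x + ψ x)
    (hφconv : ConvexOn ℝ X φ)
    (hφdiff : ∀ x ∈ X, HasFDerivWithinAt φ (φ' x) X x)
    (hLip : ∀ x ∈ X, ∀ x' ∈ X, ‖φ' x' - φ' x‖ ≤ L * ‖x - x'‖)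
    (hψconv : ConvexOn ℝ X ψ)
    (hψ' : ∀ x ∈ X, ∀ y ∈ X, ψ y ≥ ψ x + ψ' x (y - x))
    (ϑ : E → ℝ) (ϑ' : E → (E →L[ℝ] ℝ))
    (hϑconv : ConvexOn ℝ X ϑ)
    (hϑdiff : ∀ x ∈ X, HasFDerivWithinAt ϑ (ϑ' x) X x)
    (hstrong : ∀ x ∈ X, ∀ x' ∈ X, (ϑ' x - ϑ' x') (x - x') ≥ ‖x - x'‖ ^ 2)
    (V : E → E → ℝ)
    (hV : ∀ x ∈ X, ∀ z ∈ X, V x z = ϑ z - ϑ x - ϑ' x (z - x))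
    (N : ℕ) (hN : 0 < N)
    (β : ℕ → ℝ) (hβ : ∀ i, β i ≥ 2 * L)
    (x : ℕ → E) (hxX : ∀ i, i ≤ N → x i ∈ X)
    (y : ℕ → (E →L[ℝ] ℝ))
    (hprox : ∀ i < N, IsMinOn
      (fun z => y (i + 1) z + ψ z + β i * V (x i) z) X (x (i + 1)))
    (ξ : ℕ → (E →L[ℝ] ℝ)) (hξ : ∀ i, ξ (i + 1) = y (i + 1) - φ' (x i))
    (S : ℝ) (hS : S = ∑ i ∈ Finset.range N, (β i)⁻¹)
    (xhat : E) (hxhat : xhat = S⁻¹ • ∑ i ∈ Finset.range N, (β i)⁻¹ • x (i + 1))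
    (z : E) (hz : z ∈ X) :
    S * (F xhat - F z) ≤ V (x 0) z +
      ∑ i ∈ Finset.range N,
        (ξ (i + 1) (z - x i) / β i + ‖ξ (i + 1)‖ ^ 2 / (β i) ^ 2) := by
  have hβpos : ∀ i, 0 < β i := fun i => lt_of_lt_of_le (by linarith) (hβ i)
  have hSpos : 0 < S := by
    rw [hS]
    exact Finset.sum_pos (fun i _ => inv_pos.mpr (hβpos i))
      (Finset.nonempty_range_iff.mpr hN.ne')
  -- convexity of F on X
  have hFconv : ConvexOn ℝ X F := by
    refine ⟨hXconv, fun u hu v hv a b ha hb hab => ?_⟩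
    have hm : a • u + b • v ∈ X := hXconv hu hv ha hb hab
    have h1 := hφconv.2 hu hv ha hb hab
    have h2 := hψconv.2 hu hv ha hb hab
    simp only [smul_eq_mul] at h1 h2 ⊢
    rw [hF _ hm, hF _ hu, hF _ hv]
    linarith
  -- per-step inequality
  have key : ∀ i < N, (F (x (i+1)) - F z) * (β i)⁻¹ ≤
      (V (x i) z - V (x (i+1)) z) +
      (ξ (i + 1) (z - x i) / β i + ‖ξ (i + 1)‖ ^ 2 / (β i) ^ 2) := by
    intro i hi
    have hxiX : x i ∈ X := hxX i (le_of_lt hi)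
    have hpX : x (i+1) ∈ X := hxX (i+1) (Nat.succ_le_of_lt hi)
    have hβi : 0 < β i := hβpos i
    set xi := x i with hxieq
    set p := x (i+1) with hpeq
    set n := ‖p - xi‖ with hn
    set m := ‖ξ (i+1)‖ with hm
    have hn0 : 0 ≤ n := norm_nonneg _
    have hm0 : 0 ≤ m := norm_nonneg _
    -- descent lemma
    have hA : φ p - φ xi - φ' xi (p - xi) ≤ L / 2 * n ^ 2 :=
      md_aux_descent X hXconv φ φ' hφdiff L hL.le hLip xi p hxiX hpX
    -- gradient inequality
    have hB : φ xi + φ' xi (z - xi) ≤ φ z :=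
      md_aux_gradineq X hXconv φ φ' hφconv hφdiff xi z hxiX hz
    -- strong convexity
    have hD1 : 1/2 * n ^ 2 ≤ ϑ p - ϑ xi - ϑ' xi (p - xi) :=
      md_aux_strongdiv X hXconv ϑ ϑ' hϑdiff hstrong xi p hxiX hpX
    have hD2 : (0:ℝ) ≤ ϑ z - ϑ p - ϑ' p (z - p) := by
      have h := md_aux_strongdiv X hXconv ϑ ϑ' hϑdiff hstrong p z hpX hz
      nlinarith [norm_nonneg (z - p)]
    -- prox optimality
    have hsconv : ConvexOn ℝ X (fun u => ψ u + (y (i+1) - β i • ϑ' xi) u) := by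
      refine hψconv.add ⟨hXconv, fun u _ v _ a b _ _ _ => le_of_eq ?_⟩
      simp [map_add, map_smulₛₗ, smul_eq_mul]
    have hC : (fun u => ψ u + (y (i+1) - β i • ϑ' xi) u) p ≤
        (fun u => ψ u + (y (i+1) - β i • ϑ' xi) u) z + β i * ϑ' p (z - p) := by
      refine md_aux_prox X hXconv _ ϑ ϑ' (β i) hβi hsconv hϑdiff p hpX ?_ z hz
      intro u hu
      have h1 := isMinOn_iff.mp (hprox i hi) u hu
      rw [hV xi hxiX u hu, hV xi hxiX p hpX] at h1
      simp only [ContinuousLinearMap.sub_apply, ContinuousLinearMap.smul_apply,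
        smul_eq_mul, map_sub] at h1 ⊢
      nlinarith [h1]
    simp only [ContinuousLinearMap.sub_apply, ContinuousLinearMap.smul_apply,
      smul_eq_mul, map_sub] at hC
    -- bound on ξ applied to xi - p
    have hE : ξ (i+1) (xi - p) ≤ m * n := by
      have h1 : ξ (i+1) (xi - p) ≤ ‖ξ (i+1) (xi - p)‖ := le_abs_self _
      have h2 := (ξ (i+1)).le_opNorm (xi - p)
      have h3 : ‖xi - p‖ = n := by rw [hn, norm_sub_rev]
      rw [h3] at h2
      linarith
    -- expansions
    have hA' : φ' xi (p - xi) = φ' xi p - φ' xi xi := map_sub _ _ _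
    have hB' : φ' xi (z - xi) = φ' xi z - φ' xi xi := map_sub _ _ _
    have hD1' : ϑ' xi (p - xi) = ϑ' xi p - ϑ' xi xi := map_sub _ _ _
    have hD2' : ϑ' p (z - p) = ϑ' p z - ϑ' p p := map_sub _ _ _
    have hξ1 : ξ (i+1) (z - xi) = y (i+1) z - y (i+1) xi - (φ' xi z - φ' xi xi) := by
      rw [hξ]
      simp only [ContinuousLinearMap.sub_apply, map_sub, ← hxieq]
      ring
    have hξ2 : ξ (i+1) (xi - p) = y (i+1) xi - y (i+1) p - (φ' xi xi - φ' xi p) := by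
      rw [hξ]
      simp only [ContinuousLinearMap.sub_apply, map_sub, ← hxieq]
      ring
    have hVxz : V xi z = ϑ z - ϑ xi - (ϑ' xi z - ϑ' xi xi) := by
      rw [hV xi hxiX z hz, map_sub]
    have hVpz : V p z = ϑ z - ϑ p - (ϑ' p z - ϑ' p p) := by
      rw [hV p hpX z hz, map_sub]
    -- quadratic bound
    have hq : m * n + (L / 2) * n ^ 2 - β i * (1/2 * n ^ 2) ≤ m ^ 2 / β i := by
      rw [le_div_iff₀ hβi]
      nlinarith [sq_nonneg (β i * n - 2 * m),
        mul_nonneg (mul_nonneg (sub_nonneg.mpr (hβ i)) hβi.le) (sq_nonneg n), hβi]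
    -- main scalar inequality
    have hD1β := mul_le_mul_of_nonneg_left hD1 hβi.le
    rw [hD1'] at hD1β
    rw [hA'] at hA
    have hmain : F p - F z ≤ β i * V xi z - β i * V p z + ξ (i+1) (z - xi) + m ^ 2 / β i := by
      rw [hF p hpX, hF z hz, hVxz, hVpz, hξ1]
      linarith [hA, hB, hB', hC, hD1β, hE, hξ2, hq]
    have hdiv := mul_le_mul_of_nonneg_right hmain (inv_nonneg.mpr hβi.le)
    have heq : (β i * V xi z - β i * V p z + ξ (i+1) (z - xi) + m ^ 2 / β i) * (β i)⁻¹
        = (V xi z - V p z) + (ξ (i+1) (z - xi) / β i + m ^ 2 / (β i) ^ 2) := by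
      field_simp
      ring
    rw [heq] at hdiv
    exact hdiv
  -- sum the per-step inequalities
  have hsum := Finset.sum_le_sum (fun i hi => key i (Finset.mem_range.mp hi))
  rw [Finset.sum_add_distrib, Finset.sum_range_sub' (fun i => V (x i) z)] at hsum
  have hVN : 0 ≤ V (x N) z := by
    have h := md_aux_strongdiv X hXconv ϑ ϑ' hϑdiff hstrong (x N) z (hxX N le_rfl) hz
    rw [hV (x N) (hxX N le_rfl) z hz]
    nlinarith [norm_nonneg (z - x N)]
  -- Jensen's inequality
  have hw1 : ∑ i ∈ Finset.range N, S⁻¹ * (β i)⁻¹ = 1 := by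
    rw [← Finset.mul_sum, ← hS, inv_mul_cancel₀ hSpos.ne']
  have hxhat' : xhat = ∑ i ∈ Finset.range N, (S⁻¹ * (β i)⁻¹) • x (i + 1) := by
    rw [hxhat, Finset.smul_sum]
    exact Finset.sum_congr rfl (fun i _ => smul_smul _ _ _)
  have hJ : F xhat ≤ ∑ i ∈ Finset.range N, (S⁻¹ * (β i)⁻¹) * F (x (i + 1)) := by
    rw [hxhat']
    have := hFconv.map_sum_le (t := Finset.range N) (w := fun i => S⁻¹ * (β i)⁻¹)
      (p := fun i => x (i+1)) (fun i _ => mul_nonneg (inv_nonneg.mpr hSpos.le) (inv_nonneg.mpr (hβpos i).le)) hw1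
      (fun i hi => hxX (i+1) (Nat.succ_le_of_lt (Finset.mem_range.mp hi)))
    simpa [smul_eq_mul] using this
  have hJ' := mul_le_mul_of_nonneg_left hJ hSpos.le
  have e1 : ∑ i ∈ Finset.range N, (F (x (i+1)) - F z) * (β i)⁻¹
      = ∑ i ∈ Finset.range N, (β i)⁻¹ * F (x (i+1))
        - ∑ i ∈ Finset.range N, (β i)⁻¹ * F z := by
    rw [← Finset.sum_sub_distrib]
    exact Finset.sum_congr rfl (fun i _ => by ring)
  have e2 : S * F z = ∑ i ∈ Finset.range N, (β i)⁻¹ * F z := by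
    rw [hS, Finset.sum_mul]
  have e3 : S * (∑ i ∈ Finset.range N, (S⁻¹ * (β i)⁻¹) * F (x (i + 1)))
      = ∑ i ∈ Finset.range N, (β i)⁻¹ * F (x (i + 1)) := by
    rw [Finset.mul_sum]
    refine Finset.sum_congr rfl (fun i _ => ?_)
    rw [← mul_assoc, ← mul_assoc, mul_inv_cancel₀ hSpos.ne', one_mul]
  rw [e3] at hJ'
  have hgoal : S * (F xhat - F z) = S * F xhat - S * F z := by ring
  rw [hgoal, e2]
  linarith [hsum, hJ', e1, hVN]
end

section
/- (Upper bound certificate) For any points x₀, …, x_N in X and any t ≥ L, the quantity ε_N(t) = N^{-1} sup_{z∈X} ∑_{i=1}^N [⟨∇φ(x_{i−1}), x_i − z⟩ + ψ(x_i) − ψ(z) + t·V_{x_{i−1}}(x_i)] satisfies F(x̂_N) − F_* ≤ ε_N(t), where x̂_N = N^{-1} ∑_{i=1}^N x_i and F_* = min_{x∈X} F(x). -/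
open Finset

lemma line_deriv {E : Type*} [NormedAddCommGroup E] [NormedSpace ℝ E]
    {X : Set E} (hXconv : Convex ℝ X) {φ : E → ℝ} {φ' : E → (E →L[ℝ] ℝ)}
    (hdiff : ∀ x ∈ X, HasFDerivWithinAt φ (φ' x) X x)
    {a b : E} (ha : a ∈ X) (hb : b ∈ X) {s : ℝ} (hs : s ∈ Set.Icc (0:ℝ) 1) :
    HasDerivWithinAt (fun u : ℝ => φ (a + u • (b - a))) (φ' (a + s • (b - a)) (b - a))
      (Set.Icc 0 1) s := by
  have hmem : a + s • (b - a) ∈ X := hXconv.add_smul_sub_mem ha hb hs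
  have hl : HasDerivWithinAt (fun u : ℝ => a + u • (b - a)) (b - a) (Set.Icc 0 1) s := by
    simpa using (((hasDerivAt_id s).smul_const (b - a)).const_add a).hasDerivWithinAt
  have hmap : Set.MapsTo (fun u : ℝ => a + u • (b - a)) (Set.Icc 0 1) X :=
    fun u hu => hXconv.add_smul_sub_mem ha hb hu
  exact (hdiff _ hmem).comp_hasDerivWithinAt s hl hmap

lemma grad_ineq {E : Type*} [NormedAddCommGroup E] [NormedSpace ℝ E]
    {X : Set E} (hXconv : Convex ℝ X) {φ : E → ℝ} {φ' : E → (E →L[ℝ] ℝ)}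
    (hconv : ConvexOn ℝ X φ)
    (hdiff : ∀ x ∈ X, HasFDerivWithinAt φ (φ' x) X x)
    {a z : E} (ha : a ∈ X) (hz : z ∈ X) :
    φ a + φ' a (z - a) ≤ φ z := by
  set g : ℝ → ℝ := fun u => φ (a + u • (z - a)) with hg
  have hgconv : ConvexOn ℝ (Set.Icc (0:ℝ) 1) g := by
    constructor
    · exact convex_Icc 0 1
    · intro u hu v hv p q hp hq hpq
      have hmemu := hXconv.add_smul_sub_mem ha hz hu
      have hmemv := hXconv.add_smul_sub_mem ha hz hv
      have hq' : q = 1 - p := by linarith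
      subst hq'
      have key : a + (p • u + (1 - p) • v) • (z - a)
          = p • (a + u • (z - a)) + (1 - p) • (a + v • (z - a)) := by
        simp only [smul_eq_mul]
        module
      simp only [hg, key]
      exact hconv.2 hmemu hmemv hp hq hpq
  have hd : HasDerivWithinAt g (φ' a (z - a)) (Set.Icc 0 1) 0 := by
    have := line_deriv hXconv hdiff ha hz (s := 0) (by simp)
    simpa using this
  have := hgconv.le_slope_of_hasDerivWithinAt (x := 0) (y := 1) (by simp) (by simp)
    one_pos hd
  rw [slope_def_field] at this
  simp only [hg] at this
  have h0 : a + (0:ℝ) • (z - a) = a := by simp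
  have h1 : a + (1:ℝ) • (z - a) = z := by simp
  rw [h0, h1] at this
  simp at this
  have hms : (φ' a) (z - a) = (φ' a) z - (φ' a) a := map_sub _ _ _
  linarith

lemma descent_lemma {E : Type*} [NormedAddCommGroup E] [NormedSpace ℝ E]
    {X : Set E} (hXconv : Convex ℝ X) {φ : E → ℝ} {φ' : E → (E →L[ℝ] ℝ)} {L : ℝ}
    (hL : 0 ≤ L)
    (hdiff : ∀ x ∈ X, HasFDerivWithinAt φ (φ' x) X x)
    (hLip : ∀ x ∈ X, ∀ x' ∈ X, ‖φ' x' - φ' x‖ ≤ L * ‖x - x'‖)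
    {a b : E} (ha : a ∈ X) (hb : b ∈ X) :
    φ b ≤ φ a + φ' a (b - a) + L / 2 * ‖b - a‖ ^ 2 := by
  set c : ℝ := φ' a (b - a) with hc
  set K : ℝ := ‖b - a‖ ^ 2 with hK
  set h : ℝ → ℝ := fun u => φ (a + u • (b - a)) - u * c - L * K / 2 * u ^ 2 with hh
  have hderiv : ∀ s ∈ Set.Icc (0:ℝ) 1, HasDerivWithinAt h
      (φ' (a + s • (b - a)) (b - a) - c - L * K * s) (Set.Icc 0 1) s := by
    intro s hs
    have h1 := line_deriv hXconv hdiff ha hb hs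
    have h2 : HasDerivWithinAt (fun u : ℝ => u * c) c (Set.Icc 0 1) s :=
      (hasDerivAt_mul_const c).hasDerivWithinAt
    have h3' : HasDerivAt (fun u : ℝ => L * K / 2 * u ^ 2) (L * K * s) s := by
      have := (hasDerivAt_pow 2 s).const_mul (L * K / 2)
      refine this.congr_deriv ?_
      push_cast
      ring
    have h3 : HasDerivWithinAt (fun u : ℝ => L * K / 2 * u ^ 2) (L * K * s) (Set.Icc 0 1) s :=
      h3'.hasDerivWithinAt
    exact (h1.sub h2).sub h3
  have hcont : ContinuousOn h (Set.Icc 0 1) :=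
    fun s hs => (hderiv s hs).continuousWithinAt
  have hanti : AntitoneOn h (Set.Icc (0:ℝ) 1) := by
    apply antitoneOn_of_hasDerivWithinAt_nonpos (convex_Icc 0 1) hcont
      (f' := fun s => φ' (a + s • (b - a)) (b - a) - c - L * K * s)
    · intro s hs
      rw [interior_Icc] at hs
      exact ((hderiv s (Set.mem_Icc_of_Ioo hs)).mono Set.Ioo_subset_Icc_self).mono
        (by rw [interior_Icc])
    · intro s hs
      rw [interior_Icc] at hs
      have hmem : a + s • (b - a) ∈ X := hXconv.add_smul_sub_mem ha hb ⟨hs.1.le, hs.2.le⟩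
      have key : φ' (a + s • (b - a)) (b - a) - c ≤ L * K * s := by
        have h1 : φ' (a + s • (b - a)) (b - a) - c = (φ' (a + s • (b - a)) - φ' a) (b - a) := by
          simp [hc]
        rw [h1]
        calc (φ' (a + s • (b - a)) - φ' a) (b - a)
            ≤ ‖φ' (a + s • (b - a)) - φ' a‖ * ‖b - a‖ := by
              exact le_trans (le_abs_self _)
                ((φ' (a + s • (b - a)) - φ' a).le_opNorm (b - a))
          _ ≤ (L * ‖a - (a + s • (b - a))‖) * ‖b - a‖ :=
              mul_le_mul_of_nonneg_right (hLip a ha _ hmem) (norm_nonneg _)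
          _ = L * K * s := by
              have : a - (a + s • (b - a)) = -(s • (b - a)) := by abel
              rw [this, norm_neg, norm_smul, Real.norm_eq_abs, abs_of_pos hs.1, hK]
              ring
      linarith
  have := hanti (Set.left_mem_Icc.2 zero_le_one) (Set.right_mem_Icc.2 zero_le_one) zero_le_one
  simp only [hh] at this
  have h0 : a + (0:ℝ) • (b - a) = a := by simp
  have h1 : a + (1:ℝ) • (b - a) = b := by simp
  rw [h0, h1] at this
  simp at this
  linarith


/-- Upper bound certificate: for any points `x₀, …, x_N` in `X` and `t ≥ L`,
`F(x̂_N) − F_* ≤ ε_N(t)` where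
`ε_N(t) = N⁻¹ sup_{z∈X} ∑ [⟨∇φ(x_{i−1}), x_i − z⟩ + ψ(x_i) − ψ(z) + t·V_{x_{i−1}}(x_i)]`. -/
theorem certificate_upper_bound
    {E : Type*} [NormedAddCommGroup E] [NormedSpace ℝ E] [FiniteDimensional ℝ E]
    (X : Set E) (hXconv : Convex ℝ X) (hXcomp : IsCompact X) (hXne : X.Nonempty)
    (φ ψ F : E → ℝ) (φ' : E → (E →L[ℝ] ℝ)) (L : ℝ) (hL : 0 < L)
    (hF : ∀ x ∈ X, F x = φ x + ψ x)
    (hφconv : ConvexOn ℝ X φ)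
    (hφdiff : ∀ x ∈ X, HasFDerivWithinAt φ (φ' x) X x)
    (hLip : ∀ x ∈ X, ∀ x' ∈ X, ‖φ' x' - φ' x‖ ≤ L * ‖x - x'‖)
    (hψconv : ConvexOn ℝ X ψ) (hψcont : ContinuousOn ψ X)
    (ϑ : E → ℝ) (ϑ' : E → (E →L[ℝ] ℝ))
    (hϑconv : ConvexOn ℝ X ϑ)
    (hϑdiff : ∀ x ∈ X, HasFDerivWithinAt ϑ (ϑ' x) X x)
    (V : E → E → ℝ)
    (hV : ∀ x ∈ X, ∀ z ∈ X, V x z = ϑ z - ϑ x - ϑ' x (z - x))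
    (hVstrong : ∀ x ∈ X, ∀ z ∈ X, V x z ≥ (1 / 2) * ‖x - z‖ ^ 2)
    (N : ℕ) (hN : 0 < N)
    (x : ℕ → E) (hx : ∀ i, i ≤ N → x i ∈ X)
    (t : ℝ) (ht : t ≥ L)
    (xhat : E) (hxhat : xhat = (N : ℝ)⁻¹ • ∑ i ∈ Finset.range N, x (i + 1))
    (xstar : E) (hxstar : xstar ∈ X) (hmin : IsMinOn F X xstar)
    (εN : ℝ)
    (hεN : εN = (N : ℝ)⁻¹ * sSup ((fun z => ∑ i ∈ Finset.range N,
      (φ' (x i) (x (i + 1) - z) + ψ (x (i + 1)) - ψ z + t * V (x i) (x (i + 1)))) '' X)) :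
    F xhat - F xstar ≤ εN := by
  set c : ℝ := (N : ℝ)⁻¹ with hc
  have hNpos : (0:ℝ) < N := Nat.cast_pos.mpr hN
  have hcpos : 0 < c := inv_pos.mpr hNpos
  have hcN : c * N = 1 := inv_mul_cancel₀ hNpos.ne'
  -- membership of iterates
  have hxi : ∀ i ∈ Finset.range N, x (i + 1) ∈ X := fun i hi =>
    hx (i + 1) (Nat.succ_le_of_lt (Finset.mem_range.mp hi))
  have hxi' : ∀ i ∈ Finset.range N, x i ∈ X := fun i hi =>
    hx i (le_of_lt (Finset.mem_range.mp hi))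
  -- xhat ∈ X
  have hxhatX : xhat ∈ X := by
    rw [hxhat, Finset.smul_sum]
    exact hXconv.sum_mem (fun i _ => le_of_lt hcpos)
      (by simp [Finset.sum_const, hc, Finset.card_range]; field_simp)
      hxi
  -- Jensen : F xhat ≤ c * ∑ F (x (i+1))
  have hFconv : ConvexOn ℝ X (fun y => φ y + ψ y) := hφconv.add hψconv
  have jensen : F xhat ≤ c * ∑ i ∈ Finset.range N, F (x (i + 1)) := by
    have h1 : (fun y => φ y + ψ y) (∑ i ∈ Finset.range N, c • x (i + 1))
        ≤ ∑ i ∈ Finset.range N, c * (fun y => φ y + ψ y) (x (i + 1)) := by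
      apply hFconv.map_sum_le (fun i _ => le_of_lt hcpos)
        (by simp [Finset.sum_const, hc, Finset.card_range]; field_simp) hxi
    have h2 : xhat = ∑ i ∈ Finset.range N, c • x (i + 1) := by
      rw [hxhat, Finset.smul_sum]
    rw [hF xhat hxhatX, h2, Finset.mul_sum]
    refine h1.trans (le_of_eq ?_)
    apply Finset.sum_congr rfl
    intro i hi
    rw [hF _ (hxi i hi)]
  -- per-term bound at z = xstar
  have hterm : ∀ i ∈ Finset.range N,
      F (x (i + 1)) - F xstar ≤
        φ' (x i) (x (i + 1) - xstar) + ψ (x (i + 1)) - ψ xstar + t * V (x i) (x (i + 1)) := by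
    intro i hi
    have hxiX : x i ∈ X := hxi' i hi
    have hxi1X : x (i + 1) ∈ X := hxi i hi
    have hdesc := descent_lemma hXconv hL.le hφdiff hLip hxiX hxi1X
    have hgrad := grad_ineq hXconv hφconv hφdiff hxiX hxstar
    have hsplit : φ' (x i) (x (i + 1) - xstar)
        = φ' (x i) (x (i + 1) - x i) - φ' (x i) (xstar - x i) := by
      rw [← map_sub]
      congr 1
      abel
    have hVlb : t * V (x i) (x (i + 1)) ≥ L / 2 * ‖x (i + 1) - x i‖ ^ 2 := by
      have h1 := hVstrong (x i) hxiX (x (i + 1)) hxi1X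
      have h2 : ‖x i - x (i + 1)‖ = ‖x (i + 1) - x i‖ := norm_sub_rev _ _
      have hV0 : (0:ℝ) ≤ V (x i) (x (i + 1)) := le_trans (by positivity) h1
      calc t * V (x i) (x (i + 1)) ≥ L * V (x i) (x (i + 1)) :=
            mul_le_mul_of_nonneg_right ht hV0
        _ ≥ L * (1 / 2 * ‖x i - x (i + 1)‖ ^ 2) := mul_le_mul_of_nonneg_left h1 hL.le
        _ = L / 2 * ‖x (i + 1) - x i‖ ^ 2 := by rw [h2]; ring
    have hFx1 : F (x (i + 1)) = φ (x (i + 1)) + ψ (x (i + 1)) := hF _ hxi1X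
    have hFxs : F xstar = φ xstar + ψ xstar := hF _ hxstar
    rw [hsplit, hFx1, hFxs]
    linarith
  -- sum bound at z = xstar
  have hsum : ∑ i ∈ Finset.range N, (F (x (i + 1)) - F xstar)
      ≤ ∑ i ∈ Finset.range N,
        (φ' (x i) (x (i + 1) - xstar) + ψ (x (i + 1)) - ψ xstar + t * V (x i) (x (i + 1))) :=
    Finset.sum_le_sum hterm
  -- the sup dominates the value at xstar
  have hGcont : ContinuousOn (fun z => ∑ i ∈ Finset.range N,
      (φ' (x i) (x (i + 1) - z) + ψ (x (i + 1)) - ψ z + t * V (x i) (x (i + 1)))) X := by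
    apply continuousOn_finset_sum
    intro i _
    have h1 : Continuous fun z => φ' (x i) (x (i + 1) - z) :=
      (φ' (x i)).continuous.comp (continuous_const.sub continuous_id)
    exact (((h1.continuousOn.add continuousOn_const).sub hψcont).add continuousOn_const)
  have hbdd : BddAbove ((fun z => ∑ i ∈ Finset.range N,
      (φ' (x i) (x (i + 1) - z) + ψ (x (i + 1)) - ψ z + t * V (x i) (x (i + 1)))) '' X) :=
    (hXcomp.image_of_continuousOn hGcont).bddAbove
  have hsup : ∑ i ∈ Finset.range N,
      (φ' (x i) (x (i + 1) - xstar) + ψ (x (i + 1)) - ψ xstar + t * V (x i) (x (i + 1)))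
      ≤ sSup ((fun z => ∑ i ∈ Finset.range N,
      (φ' (x i) (x (i + 1) - z) + ψ (x (i + 1)) - ψ z + t * V (x i) (x (i + 1)))) '' X) :=
    le_csSup hbdd ⟨xstar, hxstar, rfl⟩
  -- combine
  have key : ∑ i ∈ Finset.range N, (F (x (i + 1)) - F xstar)
      ≤ sSup ((fun z => ∑ i ∈ Finset.range N,
      (φ' (x i) (x (i + 1) - z) + ψ (x (i + 1)) - ψ z + t * V (x i) (x (i + 1)))) '' X) :=
    hsum.trans hsup
  have hsum2 : ∑ i ∈ Finset.range N, (F (x (i + 1)) - F xstar)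
      = (∑ i ∈ Finset.range N, F (x (i + 1))) - N * F xstar := by
    rw [Finset.sum_sub_distrib, Finset.sum_const, Finset.card_range]
    simp [nsmul_eq_mul]
  rw [hεN]
  have hmul := mul_le_mul_of_nonneg_left key hcpos.le
  calc F xhat - F xstar ≤ c * ∑ i ∈ Finset.range N, F (x (i + 1)) - F xstar := by linarith
    _ = c * ((∑ i ∈ Finset.range N, F (x (i + 1))) - N * F xstar) := by
        rw [mul_sub, ← mul_assoc, hcN, one_mul]
    _ = c * ∑ i ∈ Finset.range N, (F (x (i + 1)) - F xstar) := by rw [hsum2]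
    _ ≤ c * sSup ((fun z => ∑ i ∈ Finset.range N,
        (φ' (x i) (x (i + 1) - z) + ψ (x (i + 1)) - ψ z + t * V (x i) (x (i + 1)))) '' X) := hmul
end

section
/- (Certificate difference bound, deterministic core) Suppose ∑_{i=1}^N ⟨ξ_i, z_{i−1} − x_{i−1}⟩ ≤ A and ∑_{i=1}^N ‖ξ_i‖_*² ≤ B, and that for all z ∈ X, ∑_{i=1}^N ⟨ξ_i, z − z_{i−1}⟩ ≤ ν^{-1} V_{x_0}(z) + (ν/2) ∑_{i=1}^N ‖ξ_i‖_*². Then for all z ∈ X and all μ, ν > 0: ∑_{i=1}^N ⟨ξ_i, z − x_i⟩ ≤ ν^{-1} R²Θ + A + (μ/2 + ν/2)B + μ^{-1} ∑_{i=1}^N V_{x_{i−1}}(x_i), where V_{x_0}(z) ≤ R²Θ. -/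
open Finset

lemma young_aux (μ a b : ℝ) (hμ : 0 < μ) :
    a * b ≤ (μ / 2) * a ^ 2 + (1 / (2 * μ)) * b ^ 2 := by
  have key : 2 * μ * (a * b) ≤ μ ^ 2 * a ^ 2 + b ^ 2 := by
    nlinarith [sq_nonneg (μ * a - b)]
  have h2' := mul_le_mul_of_nonneg_left key (by positivity : (0:ℝ) ≤ 1 / (2 * μ))
  have e1 : 1 / (2 * μ) * (2 * μ * (a * b)) = a * b := by field_simp
  have e2 : 1 / (2 * μ) * (μ ^ 2 * a ^ 2 + b ^ 2) = (μ / 2) * a ^ 2 + (1 / (2 * μ)) * b ^ 2 := by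
    field_simp
  rw [e1, e2] at h2'
  exact h2'

/-- Certificate difference bound, deterministic core. -/
theorem certificate_difference_core
    {E : Type*} [NormedAddCommGroup E] [NormedSpace ℝ E] [FiniteDimensional ℝ E]
    (X : Set E) (hXconv : Convex ℝ X) (hXcomp : IsCompact X)
    (V : E → E → ℝ)
    (hVstrong : ∀ x ∈ X, ∀ z ∈ X, V x z ≥ (1 / 2) * ‖x - z‖ ^ 2)
    (R Θ A B μ ν : ℝ) (hμ : 0 < μ) (hν : 0 < ν)
    (N : ℕ)
    (x z : ℕ → E) (hx : ∀ i, i ≤ N → x i ∈ X) (hzX : ∀ i, i ≤ N → z i ∈ X)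
    (ξ : ℕ → (E →L[ℝ] ℝ))
    (hV₀ : ∀ w ∈ X, V (x 0) w ≤ R ^ 2 * Θ)
    (hA : ∑ i ∈ Finset.range N, ξ (i + 1) (z i - x i) ≤ A)
    (hB : ∑ i ∈ Finset.range N, ‖ξ (i + 1)‖ ^ 2 ≤ B)
    (hz : ∀ w ∈ X, ∑ i ∈ Finset.range N, ξ (i + 1) (w - z i) ≤
      ν⁻¹ * V (x 0) w + (ν / 2) * ∑ i ∈ Finset.range N, ‖ξ (i + 1)‖ ^ 2) :
    ∀ w ∈ X, ∑ i ∈ Finset.range N, ξ (i + 1) (w - x (i + 1)) ≤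
      ν⁻¹ * (R ^ 2 * Θ) + A + (μ / 2 + ν / 2) * B +
        μ⁻¹ * ∑ i ∈ Finset.range N, V (x i) (x (i + 1)) := by
  intro w hw
  -- per-term bound on ξ (x i - x (i+1))
  have hterm : ∀ i ∈ Finset.range N, ξ (i + 1) (x i - x (i + 1)) ≤
      (μ / 2) * ‖ξ (i + 1)‖ ^ 2 + μ⁻¹ * V (x i) (x (i + 1)) := by
    intro i hi
    rw [Finset.mem_range] at hi
    have h1 : ξ (i + 1) (x i - x (i + 1)) ≤ ‖ξ (i + 1)‖ * ‖x i - x (i + 1)‖ :=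
      le_trans (le_abs_self _) ((ξ (i + 1)).le_opNorm _)
    have h2 := young_aux μ ‖ξ (i + 1)‖ ‖x i - x (i + 1)‖ hμ
    have hV := hVstrong (x i) (hx i (by omega)) (x (i + 1)) (hx (i + 1) (by omega))
    have h3 : (1 / (2 * μ)) * ‖x i - x (i + 1)‖ ^ 2 ≤ μ⁻¹ * V (x i) (x (i + 1)) := by
      rw [ge_iff_le] at hV
      have : (1 / (2 * μ)) * ‖x i - x (i + 1)‖ ^ 2 = μ⁻¹ * ((1 / 2) * ‖x i - x (i + 1)‖ ^ 2) := by
        rw [one_div, mul_inv]; ring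
      rw [this]
      exact mul_le_mul_of_nonneg_left hV (by positivity)
    linarith
  -- decomposition
  have hsplit : ∀ i ∈ Finset.range N, ξ (i + 1) (w - x (i + 1)) =
      ξ (i + 1) (w - z i) + ξ (i + 1) (z i - x i) + ξ (i + 1) (x i - x (i + 1)) := by
    intro i _
    have h : w - x (i + 1) = (w - z i) + (z i - x i) + (x i - x (i + 1)) := by abel
    rw [h, map_add, map_add]
  rw [Finset.sum_congr rfl hsplit]
  rw [Finset.sum_add_distrib, Finset.sum_add_distrib]
  have hzw := hz w hw
  have h3 : ∑ i ∈ Finset.range N, ξ (i + 1) (x i - x (i + 1)) ≤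
      (μ / 2) * (∑ i ∈ Finset.range N, ‖ξ (i + 1)‖ ^ 2) +
        μ⁻¹ * ∑ i ∈ Finset.range N, V (x i) (x (i + 1)) := by
    calc ∑ i ∈ Finset.range N, ξ (i + 1) (x i - x (i + 1))
        ≤ ∑ i ∈ Finset.range N, ((μ / 2) * ‖ξ (i + 1)‖ ^ 2 + μ⁻¹ * V (x i) (x (i + 1))) :=
          Finset.sum_le_sum hterm
      _ = _ := by rw [Finset.sum_add_distrib, ← Finset.mul_sum, ← Finset.mul_sum]
  have hV0w := hV₀ w hw
  have hνV : ν⁻¹ * V (x 0) w ≤ ν⁻¹ * (R ^ 2 * Θ) :=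
    mul_le_mul_of_nonneg_left hV0w (by positivity)
  have hμB : (μ / 2 + ν / 2) * (∑ i ∈ Finset.range N, ‖ξ (i + 1)‖ ^ 2) ≤
      (μ / 2 + ν / 2) * B :=
    mul_le_mul_of_nonneg_left hB (by positivity)
  nlinarith [hzw, hA, h3]
end
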